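/- If C is a class of languages that contains all singleton languages and is closed under nested iterated substitution, concatenation, union, and Kleene star, then C has the monadic ancestor property. -/

import Mathlib

/-- One step of rewriting: replace a factor `ℓ` by `r` for some rule `(ℓ, r) ∈ T`. -/
def OneStep {A : Type*} (T : Set (List A × List A)) (u v : List A) : Prop :=
  ∃ x y ℓ r, (ℓ, r) ∈ T ∧ u = x ++ ℓ ++ y ∧ v = x ++ r ++ y

/-- A rewriting system is `=`-monadic if for every rule `(ℓ, r)`: `|ℓ| ≥ |r|`, `ℓ` is
nonempty, and `r` is a single letter or the empty word. -/
def IsEqMonadic {A : Type*} (T : Set (List A × List A)) : Prop :=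
  ∀ ℓ r : List A, (ℓ, r) ∈ T → r.length ≤ ℓ.length ∧ ℓ ≠ [] ∧ r.length ≤ 1

/-- `T` is a `C`-rewriting system: for every right-hand side `r` actually occurring in `T`,
the language of corresponding left-hand sides lies in `C`. -/
def IsCRewriting {A : Type*} (C : Set (Language A)) (T : Set (List A × List A)) : Prop :=
  ∀ r : List A, (∃ ℓ, (ℓ, r) ∈ T) → {ℓ : List A | (ℓ, r) ∈ T} ∈ C

/-- The ancestor set `⟨L⟩_T = { u : u →*_T w for some w ∈ L }`. -/
def Ancestors {A : Type*} (T : Set (List A × List A)) (L : Language A) : Language A :=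
  {u : List A | ∃ w ∈ L, Relation.ReflTransGen (OneStep T) u w}

/-- The substitution `σ` applied to a single word, extended multiplicatively. -/
def SubstWord {A : Type*} (σ : A → Language A) : List A → Language A
  | [] => 1
  | a :: w => σ a * SubstWord σ w

/-- The substitution `σ` applied to a language. -/
def SubstLang {A : Type*} (σ : A → Language A) (L : Language A) : Language A :=
  ⋃ w ∈ L, SubstWord σ w

/-- The nested iterated substitution `σ^∞` applied to `L`: the least fixed point obtained
by repeatedly applying the (nested, i.e. `a ∈ σ(a)`) substitution `σ`. -/
def IterSubst {A : Type*} (σ : A → Language A) (L : Language A) : Language A :=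
  ⋃ n : ℕ, (SubstLang σ)^[n] L

/-- `C` is closed under nested iterated substitution. -/
def ClosedUnderNestedIterSubst {A : Type*} (C : Set (Language A)) : Prop :=
  ∀ σ : A → Language A, (∀ a, σ a ∈ C) → (∀ a, [a] ∈ σ a) →
    ∀ L ∈ C, IterSubst σ L ∈ C

namespace MAPaux

open Language Relation

variable {A : Type*}

theorem mem_add_left {l m : Language A} {x : List A} (h : x ∈ l) : x ∈ l + m :=
  Or.inl h

theorem mem_add_right {l m : Language A} {x : List A} (h : x ∈ m) : x ∈ l + m :=
  Or.inr h

theorem mem_add_elim {l m : Language A} {x : List A} (h : x ∈ l + m) :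
    x ∈ l ∨ x ∈ m := h

theorem substWord_append (σ : A → Language A) (u v : List A) :
    SubstWord σ (u ++ v) = SubstWord σ u * SubstWord σ v := by
  induction u with
  | nil => simp [SubstWord]
  | cons a t ih => simp [SubstWord, ih, mul_assoc]

theorem mem_substWord_self (σ : A → Language A) (hid : ∀ a, [a] ∈ σ a) :
    ∀ w : List A, w ∈ SubstWord σ w := by
  intro w
  induction w with
  | nil => exact Language.nil_mem_one
  | cons a t ih =>
      have : [a] ++ t ∈ σ a * SubstWord σ t := Language.append_mem_mul (hid a) ih
      simpa [SubstWord] using this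

theorem mem_substLang {σ : A → Language A} {L : Language A} {u : List A} :
    u ∈ SubstLang σ L ↔ ∃ w ∈ L, u ∈ SubstWord σ w :=
  Set.mem_iUnion₂.trans (by simp; exact Iff.rfl)

theorem self_subset_iterSubst (σ : A → Language A) (L : Language A) :
    ∀ u, u ∈ L → u ∈ IterSubst σ L :=
  fun _ hu => Set.mem_iUnion.2 ⟨0, hu⟩

theorem iterSubst_closed_subst {σ : A → Language A} {K : Language A} {w u : List A}
    (hw : w ∈ IterSubst σ K) (hu : u ∈ SubstWord σ w) : u ∈ IterSubst σ K := by
  obtain ⟨n, hn⟩ := Set.mem_iUnion.1 hw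
  refine Set.mem_iUnion.2 ⟨n + 1, ?_⟩
  rw [Function.iterate_succ_apply']
  exact mem_substLang.2 ⟨w, hn, hu⟩

theorem mem_substWord_mid {σ : A → Language A} (hid : ∀ a, [a] ∈ σ a)
    (x y : List A) {c : A} {m : List A} (hm : m ∈ σ c) :
    x ++ m ++ y ∈ SubstWord σ (x ++ [c] ++ y) := by
  have hm' : m ∈ SubstWord σ [c] := by
    have := Language.append_mem_mul hm (Language.nil_mem_one (α := A))
    simpa [SubstWord] using this
  rw [substWord_append, substWord_append]
  exact Language.append_mem_mul
    (Language.append_mem_mul (mem_substWord_self σ hid x) hm')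
    (mem_substWord_self σ hid y)

theorem nil_mem_substWord {σ : A → Language A} (hne : ∀ a, [] ∉ σ a) :
    ∀ w : List A, [] ∈ SubstWord σ w → w = [] := by
  intro w hw
  cases w with
  | nil => rfl
  | cons a t =>
      exfalso
      have hw' : ([] : List A) ∈ σ a * SubstWord σ t := hw
      obtain ⟨p, hp, q, hq, hpq⟩ := Language.mem_mul.1 hw'
      have hp0 : p = [] := (List.append_eq_nil_iff.1 hpq).1
      exact hne a (hp0 ▸ hp)

theorem nil_mem_iterate {σ : A → Language A} (hne : ∀ a, [] ∉ σ a) :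
    ∀ (n : ℕ) (K : Language A), [] ∈ (SubstLang σ)^[n] K → [] ∈ K := by
  intro n
  induction n with
  | zero => intro K hn; exact hn
  | succ n ih =>
      intro K hn
      rw [Function.iterate_succ_apply'] at hn
      obtain ⟨w, hw, h0⟩ := mem_substLang.1 hn
      have hw0 : w = [] := nil_mem_substWord hne w h0
      exact ih K (hw0 ▸ hw)

theorem nil_mem_iterSubst {σ : A → Language A} (hne : ∀ a, [] ∉ σ a)
    {K : Language A} (h : [] ∈ IterSubst σ K) : [] ∈ K := by
  obtain ⟨n, hn⟩ := Set.mem_iUnion.1 h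
  exact nil_mem_iterate hne n K hn

theorem oneStep_context {T : Set (List A × List A)} {u v : List A}
    (h : OneStep T u v) (x y : List A) : OneStep T (x ++ u ++ y) (x ++ v ++ y) := by
  obtain ⟨p, q, ℓ, r, hT, rfl, rfl⟩ := h
  exact ⟨x ++ p, q ++ y, ℓ, r, hT, by simp, by simp⟩

theorem rtg_context {T : Set (List A × List A)} {u v : List A}
    (h : Relation.ReflTransGen (OneStep T) u v) (x y : List A) :
    Relation.ReflTransGen (OneStep T) (x ++ u ++ y) (x ++ v ++ y) := by
  induction h with
  | refl => exact .refl
  | tail _ hstep ih => exact ih.tail (oneStep_context hstep x y)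

theorem rtg_append {T : Set (List A × List A)} {u u' v v' : List A}
    (h1 : Relation.ReflTransGen (OneStep T) u u')
    (h2 : Relation.ReflTransGen (OneStep T) v v') :
    Relation.ReflTransGen (OneStep T) (u ++ v) (u' ++ v') := by
  have a := rtg_context h1 [] v
  have b := rtg_context h2 u' []
  simp only [List.nil_append, List.append_nil] at a b
  exact a.trans b

theorem substWord_anc {σ : A → Language A} {T : Set (List A × List A)}
    (hσ : ∀ a, ∀ v ∈ σ a, Relation.ReflTransGen (OneStep T) v [a]) :
    ∀ w : List A, ∀ v ∈ SubstWord σ w, Relation.ReflTransGen (OneStep T) v w := by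
  intro w
  induction w with
  | nil =>
      intro v hv
      have hv0 : v = [] := hv
      subst hv0
      exact Relation.ReflTransGen.refl
  | cons a t ih =>
      intro v hv
      obtain ⟨p, hp, q, hq, rfl⟩ := Language.mem_mul.1 (hv : v ∈ σ a * SubstWord σ t)
      have := rtg_append (hσ a p hp) (ih q hq)
      simpa using this

theorem iterate_subset_anc {σ : A → Language A} {T : Set (List A × List A)}
    {K L : Language A}
    (hσ : ∀ a, ∀ v ∈ σ a, Relation.ReflTransGen (OneStep T) v [a])
    (hK : ∀ v, v ∈ K → v ∈ Ancestors T L) :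
    ∀ (n : ℕ) (u : List A), u ∈ (SubstLang σ)^[n] K → u ∈ Ancestors T L := by
  intro n
  induction n with
  | zero => exact hK
  | succ n ih =>
      intro u hn
      rw [Function.iterate_succ_apply'] at hn
      obtain ⟨w, hw, huw⟩ := mem_substLang.1 hn
      obtain ⟨w', hw', hww'⟩ := ih w hw
      exact ⟨w', hw', (substWord_anc hσ w u huw).trans hww'⟩

theorem iterSubst_subset_anc {σ : A → Language A} {T : Set (List A × List A)}
    {K L : Language A}
    (hσ : ∀ a, ∀ v ∈ σ a, Relation.ReflTransGen (OneStep T) v [a])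
    (hK : ∀ v, v ∈ K → v ∈ Ancestors T L) :
    ∀ u, u ∈ IterSubst σ K → u ∈ Ancestors T L := by
  intro u hu
  obtain ⟨n, hn⟩ := Set.mem_iUnion.1 hu
  exact iterate_subset_anc hσ hK n u hn

theorem anc_subset_iterSubst {σ : A → Language A} {T : Set (List A × List A)}
    {K L : Language A}
    (hid : ∀ a, [a] ∈ σ a)
    (hmon : IsEqMonadic T)
    (hrule : ∀ ℓ b, (ℓ, [b]) ∈ T → ℓ ∈ σ b)
    (hinsL : ∀ ℓ c, (ℓ, ([] : List A)) ∈ T → ℓ ++ [c] ∈ σ c)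
    (hinsR : ∀ ℓ c, (ℓ, ([] : List A)) ∈ T → [c] ++ ℓ ∈ σ c)
    (hnil : ∀ ℓ, (ℓ, ([] : List A)) ∈ T → [] ∈ IterSubst σ K → ℓ ∈ IterSubst σ K)
    (hLK : ∀ w, w ∈ L → w ∈ K) :
    ∀ u, u ∈ Ancestors T L → u ∈ IterSubst σ K := by
  intro u hu
  obtain ⟨w, hw, hrtg⟩ := hu
  induction hrtg using Relation.ReflTransGen.head_induction_on with
  | refl => exact self_subset_iterSubst σ K w (hLK w hw)
  | head hstep _ ih =>
      obtain ⟨x, y, ℓ, r, hT, rfl, rfl⟩ := hstep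
      match r, hT with
      | [], hT =>
          simp only [List.append_nil] at ih
          rcases List.eq_nil_or_concat x with rfl | ⟨x', c, rfl⟩
          · simp only [List.nil_append, List.append_nil] at ih ⊢
            cases y with
            | nil =>
                rw [List.append_nil]
                exact hnil ℓ hT ih
            | cons c y' =>
                have hmem : ([] : List A) ++ (ℓ ++ [c]) ++ y' ∈
                    SubstWord σ ([] ++ [c] ++ y') :=
                  mem_substWord_mid hid [] y' (hinsL ℓ c hT)
                have hmem' : ℓ ++ [c] ++ y' ∈ SubstWord σ ([c] ++ y') := by
                  simpa using hmem
                have h2 := iterSubst_closed_subst (w := [c] ++ y')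
                  (by simpa using ih) hmem'
                simpa using h2
          · have hmem : x' ++ ([c] ++ ℓ) ++ y ∈ SubstWord σ (x' ++ [c] ++ y) :=
              mem_substWord_mid hid x' y (hinsR ℓ c hT)
            have h2 := iterSubst_closed_subst (w := x' ++ [c] ++ y)
              (by simpa [List.append_assoc] using ih) hmem
            simpa [List.append_assoc] using h2
      | [b], hT =>
          exact iterSubst_closed_subst ih (mem_substWord_mid hid x y (hrule ℓ b hT))
      | b :: c :: r', hT =>
          exfalso
          have := (hmon ℓ (b :: c :: r') hT).2.2
          simp at this

end MAPaux

/-- If `C` is a class of languages that contains all singleton languages and is closed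
under nested iterated substitution, concatenation, union, and Kleene star, then `C` has the
monadic ancestor property: for every `L ∈ C` and every `C`-`=`-monadic rewriting system `T`,
the ancestor set `⟨L⟩_T` lies in `C`. -/
theorem monadic_ancestor_property_of_closures {A : Type*} (C : Set (Language A))
    (hsing : ∀ w : List A, ({w} : Language A) ∈ C)
    (hnis : ClosedUnderNestedIterSubst C)
    (hconc : ∀ L₁ ∈ C, ∀ L₂ ∈ C, L₁ * L₂ ∈ C)
    (hunion : ∀ L₁ ∈ C, ∀ L₂ ∈ C, L₁ + L₂ ∈ C)
    (hstar : ∀ L ∈ C, KStar.kstar L ∈ C) :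
    ∀ L ∈ C, ∀ T : Set (List A × List A), IsEqMonadic T → IsCRewriting C T →
      Ancestors T L ∈ C := by
  classical
  intro L hL T hmon hCrw
  set E' : Language A :=
    (({ℓ : List A | (ℓ, ([] : List A)) ∈ T} ∪ {[]}) : Set (List A)) with hE'def
  set Ta : A → Language A := fun a =>
    (({ℓ : List A | (ℓ, [a]) ∈ T} ∪ {[a]}) : Set (List A)) with hTadef
  set σ : A → Language A := fun a => E' * Ta a * E' with hσdef
  set K : Language A := KStar.kstar E' * L with hKdef
  have hE'C : E' ∈ C := by
    by_cases h : ∃ ℓ, (ℓ, ([] : List A)) ∈ T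
    · rw [hE'def]
      have := hunion _ (hCrw [] h) _ (hsing [])
      exact this
    · have heq : E' = ({[]} : Language A) := by
        rw [hE'def]
        apply Set.ext
        intro v
        constructor
        · intro hv
          rcases hv with hv | hv
          · exact absurd ⟨v, hv⟩ h
          · exact hv
        · intro hv
          exact Or.inr hv
      rw [heq]
      exact hsing []
  have hTaC : ∀ a, Ta a ∈ C := by
    intro a
    by_cases h : ∃ ℓ, (ℓ, [a]) ∈ T
    · simp only [hTadef]
      have := hunion _ (hCrw [a] h) _ (hsing [a])
      exact this
    · have heq : Ta a = ({[a]} : Language A) := by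
        rw [hTadef]
        apply Set.ext
        intro v
        constructor
        · intro hv
          rcases hv with hv | hv
          · exact absurd ⟨v, hv⟩ h
          · exact hv
        · intro hv
          exact Or.inr hv
      rw [heq]
      exact hsing [a]
  have hσC : ∀ a, σ a ∈ C := fun a => hconc _ (hconc _ hE'C _ (hTaC a)) _ hE'C
  have hnilE' : ([] : List A) ∈ E' := by
    rw [hE'def]
    exact Or.inr rfl
  have haTa : ∀ a, [a] ∈ Ta a := by
    intro a
    simp only [hTadef]
    exact Or.inr rfl
  have hEmem : ∀ ℓ, (ℓ, ([] : List A)) ∈ T → ℓ ∈ E' := by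
    intro ℓ h
    rw [hE'def]
    exact Or.inl h
  have hTmem : ∀ ℓ b, (ℓ, [b]) ∈ T → ℓ ∈ Ta b := by
    intro ℓ b h
    simp only [hTadef]
    exact Or.inl h
  have hE'elim : ∀ e, e ∈ E' → (e, ([] : List A)) ∈ T ∨ e = [] := by
    intro e he
    rw [hE'def] at he
    exact he
  have hTaelim : ∀ a v, v ∈ Ta a → (v, [a]) ∈ T ∨ v = [a] := by
    intro a v hv
    simp only [hTadef] at hv
    exact hv
  have hid : ∀ a, [a] ∈ σ a := by
    intro a
    have : ([] : List A) ++ [a] ++ [] ∈ E' * Ta a * E' :=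
      Language.append_mem_mul (Language.append_mem_mul hnilE' (haTa a)) hnilE'
    simpa using this
  have hKC : K ∈ C := hconc _ (hstar _ hE'C) _ hL
  have hE'anc : ∀ e ∈ E', Relation.ReflTransGen (OneStep T) e [] := by
    intro e he
    rcases hE'elim e he with he | he
    · exact Relation.ReflTransGen.single ⟨[], [], e, [], he, by simp, by simp⟩
    · have : e = [] := he
      subst this
      exact Relation.ReflTransGen.refl
  have hTaanc : ∀ a, ∀ v ∈ Ta a, Relation.ReflTransGen (OneStep T) v [a] := by
    intro a v hv
    rcases hTaelim a v hv with hv | hv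
    · exact Relation.ReflTransGen.single ⟨[], [], v, [a], hv, by simp, by simp⟩
    · have : v = [a] := hv
      subst this
      exact Relation.ReflTransGen.refl
  have hσanc : ∀ a, ∀ v ∈ σ a, Relation.ReflTransGen (OneStep T) v [a] := by
    intro a v hv
    obtain ⟨pq, hpq, e2, he2, rfl⟩ := Language.mem_mul.1 (hv : v ∈ E' * Ta a * E')
    obtain ⟨e1, he1, m, hm, rfl⟩ := Language.mem_mul.1 hpq
    have := MAPaux.rtg_append (MAPaux.rtg_append (hE'anc e1 he1) (hTaanc a m hm))
      (hE'anc e2 he2)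
    simpa using this
  have hKanc : ∀ v, v ∈ K → v ∈ Ancestors T L := by
    intro v hv
    obtain ⟨e, he, w, hw, rfl⟩ := Language.mem_mul.1 (hv : v ∈ KStar.kstar E' * L)
    obtain ⟨Ls, rfl, hLs⟩ := Language.mem_kstar.1 he
    have hflat : ∀ Ms : List (List A), (∀ y ∈ Ms, y ∈ E') →
        Relation.ReflTransGen (OneStep T) Ms.flatten [] := by
      intro Ms
      induction Ms with
      | nil => intro _; exact Relation.ReflTransGen.refl
      | cons a Ms ih =>
          intro hmem
          have h1 := hE'anc a (hmem a (by simp))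
          have h2 := ih (fun y hy => hmem y (by simp [hy]))
          have := MAPaux.rtg_append h1 h2
          simpa using this
    refine ⟨w, hw, ?_⟩
    have := MAPaux.rtg_append (hflat Ls hLs) (Relation.ReflTransGen.refl (a := w))
    simpa using this
  have hLK : ∀ w, w ∈ L → w ∈ K := by
    intro w hw
    have : ([] : List A) ++ w ∈ KStar.kstar E' * L :=
      Language.append_mem_mul (Language.nil_mem_kstar E') hw
    simpa using this
  have hne : ∀ a, [] ∉ σ a := by
    intro a h
    obtain ⟨pq, hpq, e2, he2, hpqe⟩ :=
      Language.mem_mul.1 (h : ([] : List A) ∈ E' * Ta a * E')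
    obtain ⟨e1, he1, m, hm, rfl⟩ := Language.mem_mul.1 hpq
    have hm0 : m = [] := (List.append_eq_nil_iff.1 (List.append_eq_nil_iff.1 hpqe).1).2
    rcases hTaelim a [] (hm0 ▸ hm) with hm' | hm'
    · exact (hmon _ _ hm').2.1 rfl
    · exact List.cons_ne_nil a [] hm'.symm
  have key : Ancestors T L = IterSubst σ K := by
    apply Set.ext
    intro u
    constructor
    · refine MAPaux.anc_subset_iterSubst hid hmon ?_ ?_ ?_ ?_ hLK u
      · intro ℓ b hT
        have : ([] : List A) ++ ℓ ++ [] ∈ E' * Ta b * E' :=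
          Language.append_mem_mul
            (Language.append_mem_mul hnilE' (hTmem ℓ b hT)) hnilE'
        simpa using this
      · intro ℓ c hT
        have : ℓ ++ [c] ++ [] ∈ E' * Ta c * E' :=
          Language.append_mem_mul
            (Language.append_mem_mul (hEmem ℓ hT) (haTa c)) hnilE'
        simpa using this
      · intro ℓ c hT
        have : ([] : List A) ++ [c] ++ ℓ ∈ E' * Ta c * E' :=
          Language.append_mem_mul
            (Language.append_mem_mul hnilE' (haTa c)) (hEmem ℓ hT)
        simpa using this
      · intro ℓ hT h0
        have h0K : ([] : List A) ∈ K := MAPaux.nil_mem_iterSubst hne h0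
        obtain ⟨e, he, w, hw, hew⟩ := Language.mem_mul.1 (h0K : _ ∈ KStar.kstar E' * L)
        have hw0 : w = [] := (List.append_eq_nil_iff.1 hew).2
        have hℓstar : ℓ ∈ KStar.kstar E' := by
          have : [ℓ].flatten ∈ KStar.kstar E' := by
            apply Language.join_mem_kstar
            intro y hy
            simp only [List.mem_singleton] at hy
            subst hy
            exact hEmem _ hT
          simpa using this
        have : ℓ ++ [] ∈ KStar.kstar E' * L :=
          Language.append_mem_mul hℓstar (hw0 ▸ hw)
        exact MAPaux.self_subset_iterSubst σ K ℓ (by simpa using this)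
    · exact MAPaux.iterSubst_subset_anc hσanc hKanc u
  rw [key]
  exact hnis σ hσC hid K hKC
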